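/- If there exists an abstract counterexample trace with respect to an abstraction preorder ≤_L — i.e., a sequence σ₁,…,σₙ with valuation v, phases q₁ = ι,…,qₙ, and intermediate states σ̃ᵢ with (σ̃ᵢ, v) ≤_L (σᵢ, v) and (σ̃ᵢ,σᵢ₊₁) ∈ TR and (σ̃ᵢ,σᵢ₊₁) ∈ δ qᵢ qᵢ₊₁ v for all i < n, and σ₁ ∈ Init, such that either σᵢ ∉ P v for some i, or some σᵢ has a TR-successor σ' with (σ̃,σ') ∉ δ qᵢ q' v for all q' for some σ̃ with (σ̃,v) ≤_L (σᵢ,v), where here the violation is witnessed at (σᵢ, qᵢ) — then there is no safe inductive phase automaton over the given structure whose phase characterizations are all closed under the abstraction, i.e., such that (σ̃,v) ≤_L (σ,v) and σ ∈ φ q v imply σ̃ ∈ φ q v. -/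
import Mathlib

/-- An abstract counterexample trace implies no safe inductive phase automaton
    with abstraction-closed characterizations exists over the given structure. -/
theorem abstract_counterexample_trace_implies_no_safe_inductive_automaton
    {S V Q : Type*}
    (Init : Set S) (TR : Set (S × S)) (ι : Q)
    (δ : Q → Q → V → Set (S × S)) (P : V → Set S)
    (leL : (S × V) → (S × V) → Prop) (hrefl : ∀ x, leL x x)
    (n : ℕ) (σ : ℕ → S) (σtil : ℕ → S) (v : V) (qs : ℕ → Q)
    (h0 : σ 0 ∈ Init) (hq0 : qs 0 = ι)
    (habs : ∀ i < n, leL (σtil i, v) (σ i, v))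
    (hstep : ∀ i < n, (σtil i, σ (i + 1)) ∈ TR)
    (hmatch : ∀ i < n, (σtil i, σ (i + 1)) ∈ δ (qs i) (qs (i + 1)) v)
    (hviol :
      (∃ i ≤ n, σ i ∉ P v) ∨
      (∃ i ≤ n, ∃ σt σ' : S, leL (σt, v) (σ i, v) ∧ (σt, σ') ∈ TR ∧
        ∀ q' : Q, (σt, σ') ∉ δ (qs i) q' v)) :
    ¬ ∃ φ : Q → V → Set S,
        (∀ q v' s st, s ∈ φ q v' → leL (st, v') (s, v') → st ∈ φ q v') ∧
        (∀ v', Init ⊆ φ ι v') ∧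
        (∀ q p v' s s', s ∈ φ q v' → (s, s') ∈ δ q p v' → s' ∈ φ p v') ∧
        (∀ q v' s s', s ∈ φ q v' → (s, s') ∈ TR → ∃ p, (s, s') ∈ δ q p v') ∧
        (∀ q v', φ q v' ⊆ P v') := by
  rintro ⟨φ, hclosed, hinit, hind, hcomp, hsafe⟩
  have key : ∀ i ≤ n, σ i ∈ φ (qs i) v := by
    intro i
    induction i with
    | zero => intro _; rw [hq0]; exact hinit v h0
    | succ k ih =>
      intro hk
      have hk' : k < n := Nat.lt_of_succ_le hk
      have h1 := ih (le_of_lt hk')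
      have h2 := hclosed _ _ _ _ h1 (habs k hk')
      exact hind _ _ _ _ _ h2 (hmatch k hk')
  rcases hviol with ⟨i, hi, hP⟩ | ⟨i, hi, σt, σ', hle, htr, hno⟩
  · exact hP (hsafe _ _ (key i hi))
  · have := hclosed _ _ _ _ (key i hi) hle
    obtain ⟨p, hp⟩ := hcomp _ _ _ _ this htr
    exact hno p hp
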